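/- Let n : ℕ and let G = (Fin n → ZMod 2) denote 𝔽₂ⁿ with the bilinear form ⟨x,y⟩ = Σᵢ xᵢyᵢ ∈ ZMod 2. Let H denote the n-qubit Hadamard transform on functions ψ : G → ℂ, defined by (Hψ)(y) = 2^{−n/2} Σ_{x∈G} χ(⟨x,y⟩) ψ(x), where χ(0) = 1 and χ(1) = −1. For every ZMod 2-submodule A of G, the Hadamard transform maps the subspace state of A to the subspace state of its dual: H |A⟩ = |A^⊥⟩, where |A⟩ : G → ℂ takes the value (card A)^{−1/2} on elements of A and 0 elsewhere, and A^⊥ = {y ∈ G : ⟨x,y⟩ = 0 for all x ∈ A}. -/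

import Mathlib

/-- The character `χ : ZMod 2 → ℂ` with `χ(0) = 1` and `χ(1) = -1`. -/
def chi (b : ZMod 2) : ℂ := if b = 0 then 1 else -1

/-- The bilinear form `⟨x, y⟩ = ∑ i, xᵢ yᵢ` on `𝔽₂ⁿ`. -/
def bform {n : ℕ} (x y : Fin n → ZMod 2) : ZMod 2 := ∑ i, x i * y i

/-- The `n`-qubit Hadamard transform:
`(Hψ)(y) = 2^(−n/2) ∑ₓ χ(⟨x,y⟩) ψ(x)`. -/
noncomputable def Had (n : ℕ) (ψ : (Fin n → ZMod 2) → ℂ) : (Fin n → ZMod 2) → ℂ :=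
  fun y => (((Real.sqrt (2 ^ n))⁻¹ : ℝ) : ℂ) * ∑ x, chi (bform x y) * ψ x

/-- The subspace state `|S⟩`, taking the value `(card S)^(−1/2)` on elements of `S` and
`0` elsewhere. -/
noncomputable def subspaceState (n : ℕ) (S : Set (Fin n → ZMod 2)) :
    (Fin n → ZMod 2) → ℂ :=
  S.indicator fun _ => (((Real.sqrt (Nat.card S))⁻¹ : ℝ) : ℂ)

lemma chi_one : chi 1 = -1 := by norm_num [chi]

lemma chi_add (a b : ZMod 2) : chi (a + b) = chi a * chi b := by
  have h : ∀ c : ZMod 2, c = 0 ∨ c = 1 := by decide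
  rcases h a with ha | ha <;> rcases h b with hb | hb <;> subst ha <;> subst hb <;>
    simp only [show ((1 : ZMod 2) + 1) = 0 from by decide, add_zero, zero_add, chi_one] <;>
    norm_num [chi]

lemma zmod2_eq_one {a : ZMod 2} (h : a ≠ 0) : a = 1 := by revert h; revert a; decide

lemma sum_chi_addHom_eq_zero {M : Type*} [AddCommGroup M] [Fintype M] (f : M →+ ZMod 2)
    (h : ∃ m, f m ≠ 0) : ∑ m, chi (f m) = 0 := by
  obtain ⟨m₀, hm⟩ := h
  have h1 : f m₀ = 1 := zmod2_eq_one hm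
  have hshift : ∑ m, chi (f (m₀ + m)) = ∑ m, chi (f m) :=
    Fintype.sum_equiv (Equiv.addLeft m₀) _ _ (fun m => rfl)
  have hneg : ∀ m, chi (f (m₀ + m)) = - chi (f m) := by
    intro m
    rw [map_add, h1, chi_add, chi_one]; ring
  rw [Finset.sum_congr rfl (fun m _ => hneg m), Finset.sum_neg_distrib] at hshift
  linear_combination (-1/2 : ℂ) * hshift

def bformL {n : ℕ} (y : Fin n → ZMod 2) : (Fin n → ZMod 2) →+ ZMod 2 where
  toFun x := bform x y
  map_zero' := by simp [bform]
  map_add' a b := by simp [bform, add_mul, Finset.sum_add_distrib]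

def bformR {n : ℕ} (x : Fin n → ZMod 2) : (Fin n → ZMod 2) →+ ZMod 2 where
  toFun y := bform x y
  map_zero' := by simp [bform]
  map_add' a b := by simp [bform, mul_add, Finset.sum_add_distrib]

open Classical in
lemma char_sum {n : ℕ} (A : Submodule (ZMod 2) (Fin n → ZMod 2)) (y : Fin n → ZMod 2) :
    ∑ x : A, chi (bform (x : Fin n → ZMod 2) y)
      = if (∀ x ∈ (A : Set (Fin n → ZMod 2)), bform x y = 0) then (Nat.card A : ℂ) else 0 := by
  split_ifs with h
  · have : ∀ x : A, chi (bform (x : Fin n → ZMod 2) y) = 1 := by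
      intro x; rw [h x x.2]; simp [chi]
    simp [this, Nat.card_eq_fintype_card]
  · push_neg at h
    obtain ⟨x₀, hx₀, hb⟩ := h
    exact sum_chi_addHom_eq_zero ((bformL y).comp A.subtype.toAddMonoidHom) ⟨⟨x₀, hx₀⟩, hb⟩

lemma sum_chi_full {n : ℕ} (x : Fin n → ZMod 2) :
    ∑ y : Fin n → ZMod 2, chi (bform x y) = if x = 0 then ((2 : ℂ) ^ n) else 0 := by
  split_ifs with hx
  · subst hx
    have : ∀ y : Fin n → ZMod 2, chi (bform 0 y) = 1 := by
      intro y; simp [bform, chi]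
    simp [this, Finset.card_univ]
  · apply sum_chi_addHom_eq_zero (bformR x)
    obtain ⟨i, hi⟩ := Function.ne_iff.mp hx
    refine ⟨Pi.single i 1, ?_⟩
    have : bform x (Pi.single i 1) = x i := by
      simp [bform, Pi.single_apply, mul_ite, Finset.sum_ite_eq']
    exact (show bform x (Pi.single i 1) ≠ 0 by rw [this]; exact hi)

open Classical in
lemma card_mul_card_dual {n : ℕ} (A : Submodule (ZMod 2) (Fin n → ZMod 2)) :
    Nat.card A * Nat.card ↥{y | ∀ x ∈ (A : Set (Fin n → ZMod 2)), bform x y = 0} = 2 ^ n := by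
  set B : Set (Fin n → ZMod 2) := {y | ∀ x ∈ (A : Set (Fin n → ZMod 2)), bform x y = 0} with hB
  have hc : ((Nat.card B : ℂ) * (Nat.card A : ℂ)) = (2 : ℂ) ^ n := by
    have h1 : ∑ y : Fin n → ZMod 2, ∑ x : A, chi (bform (x : Fin n → ZMod 2) y)
        = (Nat.card B : ℂ) * (Nat.card A : ℂ) := by
      rw [Finset.sum_congr rfl (fun y _ => char_sum A y)]
      rw [Finset.sum_ite, Finset.sum_const, Finset.sum_const_zero, add_zero]
      rw [nsmul_eq_mul]
      congr 1
      rw [Nat.cast_inj, Nat.card_eq_fintype_card]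
      exact (Fintype.card_subtype _).symm
    have h2 : ∑ y : Fin n → ZMod 2, ∑ x : A, chi (bform (x : Fin n → ZMod 2) y)
        = (2 : ℂ) ^ n := by
      rw [Finset.sum_comm]
      have : ∀ x : A, ∑ y : Fin n → ZMod 2, chi (bform (x : Fin n → ZMod 2) y)
          = if x = (0 : A) then ((2 : ℂ) ^ n) else 0 := by
        intro x
        rw [sum_chi_full]
        congr 1
        simp only [eq_iff_iff, ZeroMemClass.coe_eq_zero]
      rw [Finset.sum_congr rfl (fun x _ => this x), Finset.sum_ite_eq' Finset.univ (0 : A)]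
      simp
    rw [← h1, h2]
  rw [mul_comm]
  exact_mod_cast hc


set_option maxHeartbeats 1000000

/-- **Completeness identity.** The Hadamard transform maps the subspace state of a
`ZMod 2`-submodule `A ≤ 𝔽₂ⁿ` to the subspace state of its dual: `H|A⟩ = |A^⊥⟩`. -/
theorem hadamard_subspace_state_eq_dual
    (n : ℕ) (A : Submodule (ZMod 2) (Fin n → ZMod 2)) :
    Had n (subspaceState n (A : Set (Fin n → ZMod 2)))
      = subspaceState n {y | ∀ x ∈ (A : Set (Fin n → ZMod 2)), bform x y = 0} := by
  classical
  funext y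
  set B : Set (Fin n → ZMod 2) := {y | ∀ x ∈ (A : Set (Fin n → ZMod 2)), bform x y = 0} with hB
  have hconv : ∀ c : ℂ, ∑ x : Fin n → ZMod 2,
      chi (bform x y) * Set.indicator (A : Set (Fin n → ZMod 2)) (fun _ => c) x
      = (∑ x : A, chi (bform (x : Fin n → ZMod 2) y)) * c := by
    intro c
    have e : ∀ x : Fin n → ZMod 2,
        chi (bform x y) * Set.indicator (A : Set (Fin n → ZMod 2)) (fun _ => c) x
        = if x ∈ A then chi (bform x y) * c else 0 := by
      intro x; by_cases hx : x ∈ A <;> simp [Set.indicator_apply, hx]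
    rw [Finset.sum_congr rfl (fun x _ => e x), ← Finset.sum_filter,
      Finset.sum_subtype (p := fun x => x ∈ A) _ (by simp) (fun x => chi (bform x y) * c),
      ← Finset.sum_mul]
  have hcard := card_mul_card_dual A
  rw [← hB] at hcard
  simp only [Had, subspaceState, SetLike.coe_sort_coe]
  rw [hconv, char_sum]
  by_cases hy : ∀ x ∈ (A : Set (Fin n → ZMod 2)), bform x y = 0
  · rw [if_pos hy, Set.indicator_of_mem (show y ∈ B from hy)]
    have hA : 0 < Nat.card A := Nat.card_pos
    have hBne : (0 : Fin n → ZMod 2) ∈ B := by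
      intro x hx; simp [bform]
    haveI : Nonempty B := ⟨⟨0, hBne⟩⟩
    have hBpos : 0 < Nat.card B := Nat.card_pos
    have hmul : (Nat.card A : ℝ) * (Nat.card B : ℝ) = (2 : ℝ) ^ n := by
      exact_mod_cast congrArg (Nat.cast (R := ℝ)) hcard
    have hs : Real.sqrt ((2 : ℝ) ^ n)
        = Real.sqrt (Nat.card A) * Real.sqrt (Nat.card B) := by
      rw [← Real.sqrt_mul (by positivity), hmul]
    have hA' : (0 : ℝ) < Real.sqrt (Nat.card A) :=
      Real.sqrt_pos.mpr (by exact_mod_cast hA)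
    have hB' : (0 : ℝ) < Real.sqrt (Nat.card B) :=
      Real.sqrt_pos.mpr (by exact_mod_cast hBpos)
    have hsq : Real.sqrt (Nat.card A) * Real.sqrt (Nat.card A) = (Nat.card A : ℝ) :=
      Real.mul_self_sqrt (by positivity)
    have key : (Real.sqrt ((2 : ℝ) ^ n))⁻¹
        * ((Nat.card A : ℝ) * (Real.sqrt (Nat.card A))⁻¹)
        = (Real.sqrt (Nat.card B))⁻¹ := by
      have h1 : (Real.sqrt (Nat.card A))⁻¹ * ((Nat.card A : ℝ) * (Real.sqrt (Nat.card A))⁻¹)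
          = 1 := by
        rw [← hsq]
        field_simp
        rw [Real.sqrt_sq hA'.le]
      rw [hs, mul_inv]
      calc (Real.sqrt (Nat.card A))⁻¹ * (Real.sqrt (Nat.card B))⁻¹
            * ((Nat.card A : ℝ) * (Real.sqrt (Nat.card A))⁻¹)
          = (Real.sqrt (Nat.card B))⁻¹
            * ((Real.sqrt (Nat.card A))⁻¹ * ((Nat.card A : ℝ) * (Real.sqrt (Nat.card A))⁻¹)) := by
            ring
        _ = (Real.sqrt (Nat.card B))⁻¹ := by rw [h1, mul_one]
    exact_mod_cast congrArg (Complex.ofReal) key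
  · rw [if_neg hy, Set.indicator_of_notMem (show y ∉ B from hy), zero_mul, mul_zero]
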